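/- Let p = (p₁,p₂) and suppose S ∈ Sp(n,ℝ) satisfies C̃_k = S C_k S⁻¹ for k = 1,2, where C_k = [[B_k,0],[0,p_kIₙ−B_kᵀ]] and C̃_k = [[B̃_k,0],[0,p_kIₙ−B̃_kᵀ]]. Then the linear map Φ : 𝔤_{p,B} → 𝔤_{p,B̃} defined by Φ(M_k) = M̃_k, Φ(W_w) = W_{Sw}, Φ(Z_z) = Z_z is a Lie algebra isomorphism. -/

import Mathlib

open Matrix

/-- The standard symplectic matrix 𝒥. -/
noncomputable def Jmat (n : ℕ) : Matrix (Fin n ⊕ Fin n) (Fin n ⊕ Fin n) ℝ :=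
  Matrix.fromBlocks 0 (-1) 1 0

/-- The symplectic form ⟦w, w̃⟧ = wᵀ 𝒥 w̃. -/
noncomputable def sympl (n : ℕ) (w w' : Fin n ⊕ Fin n → ℝ) : ℝ :=
  w ⬝ᵥ (Jmat n) *ᵥ w'

/-- C = [[B, 0],[0, p Iₙ − Bᵀ]]. -/
noncomputable def Cmat (n : ℕ) (p : ℝ) (B : Matrix (Fin n) (Fin n) ℝ) :
    Matrix (Fin n ⊕ Fin n) (Fin n ⊕ Fin n) ℝ :=
  Matrix.fromBlocks B 0 0 (p • 1 - Bᵀ)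

/-- The bracket of 𝔤_{p,B} on coordinates (s, t, w, z) ↔ s M₁ + t M₂ + W_w + Z_z:
[M_k, W_w] = W_{C_k w}, [M_k, Z_z] = Z_{p_k z}, [W_w, W_w̃] = Z_{⟦w,w̃⟧}. -/
noncomputable def gBr (n : ℕ) (p₁ p₂ : ℝ) (B₁ B₂ : Matrix (Fin n) (Fin n) ℝ)
    (a b : ℝ × ℝ × (Fin n ⊕ Fin n → ℝ) × ℝ) : ℝ × ℝ × (Fin n ⊕ Fin n → ℝ) × ℝ :=
  (0, 0,
    (a.1 • Cmat n p₁ B₁ + a.2.1 • Cmat n p₂ B₂) *ᵥ b.2.2.1 -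
      (b.1 • Cmat n p₁ B₁ + b.2.1 • Cmat n p₂ B₂) *ᵥ a.2.2.1,
    (a.1 * p₁ + a.2.1 * p₂) * b.2.2.2 - (b.1 * p₁ + b.2.1 * p₂) * a.2.2.2 +
      sympl n a.2.2.1 b.2.2.1)

/-- If S ∈ Sp(n,ℝ) with C̃_k = S C_k S⁻¹ (k = 1,2), then Φ(M_k) = M̃_k, Φ(W_w) = W_{Sw},
Φ(Z_z) = Z_z defines a Lie algebra isomorphism 𝔤_{p,B} → 𝔤_{p,B̃}. -/
theorem intertwined_C_gives_isomorphism (n : ℕ) (p₁ p₂ : ℝ)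
    (B₁ B₂ B₁' B₂' : Matrix (Fin n) (Fin n) ℝ)
    (S : Matrix (Fin n ⊕ Fin n) (Fin n ⊕ Fin n) ℝ)
    (hS : Sᵀ * Jmat n * S = Jmat n)
    (hC₁ : Cmat n p₁ B₁' = S * Cmat n p₁ B₁ * S⁻¹)
    (hC₂ : Cmat n p₂ B₂' = S * Cmat n p₂ B₂ * S⁻¹) :
    IsLinearMap ℝ (fun a : ℝ × ℝ × (Fin n ⊕ Fin n → ℝ) × ℝ =>
        (a.1, a.2.1, S *ᵥ a.2.2.1, a.2.2.2)) ∧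
    Function.Bijective (fun a : ℝ × ℝ × (Fin n ⊕ Fin n → ℝ) × ℝ =>
        (a.1, a.2.1, S *ᵥ a.2.2.1, a.2.2.2)) ∧
    (∀ a b : ℝ × ℝ × (Fin n ⊕ Fin n → ℝ) × ℝ,
      (fun a : ℝ × ℝ × (Fin n ⊕ Fin n → ℝ) × ℝ =>
        (a.1, a.2.1, S *ᵥ a.2.2.1, a.2.2.2)) (gBr n p₁ p₂ B₁ B₂ a b) =
      gBr n p₁ p₂ B₁' B₂' (a.1, a.2.1, S *ᵥ a.2.2.1, a.2.2.2)
        (b.1, b.2.1, S *ᵥ b.2.2.1, b.2.2.2)) := by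
  -- J is invertible
  have hJ : Jmat n * (-(Jmat n)) = 1 := by
    simp [Jmat, Matrix.fromBlocks_neg, Matrix.fromBlocks_multiply, ← Matrix.fromBlocks_one]
  have hJdet : IsUnit (Jmat n).det := by
    have := congrArg Matrix.det hJ
    rw [Matrix.det_mul, Matrix.det_one] at this
    exact IsUnit.of_mul_eq_one _ this
  -- S is invertible
  have hSdet : IsUnit S.det := by
    have h := congrArg Matrix.det hS
    rw [Matrix.det_mul, Matrix.det_mul, Matrix.det_transpose] at h
    have hd : (Jmat n).det ≠ 0 := hJdet.ne_zero
    have h2 : S.det * S.det = 1 := by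
      apply mul_right_cancel₀ hd
      rw [one_mul]; nlinarith [h]
    exact IsUnit.of_mul_eq_one _ h2
  have hinv : S⁻¹ * S = 1 := Matrix.nonsing_inv_mul S hSdet
  have hinv' : S * S⁻¹ = 1 := Matrix.mul_nonsing_inv S hSdet
  refine ⟨⟨fun a b => by simp [Matrix.mulVec_add, Prod.ext_iff],
          fun c a => by simp [Matrix.mulVec_smul, Prod.ext_iff]⟩, ?_, ?_⟩
  · -- bijective
    refine Function.bijective_iff_has_inverse.2
      ⟨fun a => (a.1, a.2.1, S⁻¹ *ᵥ a.2.2.1, a.2.2.2), fun a => ?_, fun a => ?_⟩ <;>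
      simp [Matrix.mulVec_mulVec, hinv, hinv', Prod.ext_iff]
  · -- bracket
    intro a b
    have hC₁' : Cmat n p₁ B₁' * S = S * Cmat n p₁ B₁ := by
      rw [hC₁, Matrix.mul_assoc, hinv, Matrix.mul_one]
    have hC₂' : Cmat n p₂ B₂' * S = S * Cmat n p₂ B₂ := by
      rw [hC₂, Matrix.mul_assoc, hinv, Matrix.mul_one]
    have hsym : ∀ w w' : Fin n ⊕ Fin n → ℝ, sympl n (S *ᵥ w) (S *ᵥ w') = sympl n w w' := by
      intro w w'
      unfold sympl
      rw [Matrix.mulVec_mulVec, Matrix.dotProduct_mulVec, ← Matrix.vecMul_transpose,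
        Matrix.vecMul_vecMul, ← Matrix.dotProduct_mulVec, ← Matrix.mul_assoc, hS]
    simp only [gBr, Prod.mk.injEq]
    refine ⟨trivial, trivial, ?_, ?_⟩
    · rw [Matrix.mulVec_sub, Matrix.mulVec_mulVec, Matrix.mulVec_mulVec,
        Matrix.mulVec_mulVec, Matrix.mulVec_mulVec]
      congr 1 <;>
      · rw [Matrix.mul_add, Matrix.add_mul, Matrix.mul_smul, Matrix.smul_mul,
          Matrix.mul_smul, Matrix.smul_mul, hC₁', hC₂']
    · rw [hsym]
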